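/- Let G = (V,E) be a finite simple graph, let φ ≥ 0 be a real number, and let σ be a uniformly random linear order on E. Fix a vertex v and a function f : L_2(v) → L_1(v) such that f(w) is adjacent to w for every w ∈ L_2(v). Then the expected number of vertices w ∈ L_2(v) such that the edge {f(w), w} is settled for f(w) is at least |L_2(v)|/(1+φ). In particular, E[1 + |L_1(v)| + #{w ∈ L_2(v) : {f(w),w} is settled for f(w)}] ≥ |B_2(v)|/(1+φ). -/

import Mathlib

/-- The set of vertices at graph distance exactly `h` from `u`. -/
def graphSphere {V : Type*} (G : SimpleGraph V) (u : V) (h : ℕ) : Set V :=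
  {v | G.Reachable u v ∧ G.dist u v = h}

/-- The set of vertices at graph distance at most `h` from `u`. -/
def graphBall {V : Type*} (G : SimpleGraph V) (u : V) (h : ℕ) : Set V :=
  {v | G.Reachable u v ∧ G.dist u v ≤ h}

/-- A graph is locally `γ`-sparse if for every vertex `u`:
(i) every `v ∈ L_1(u)` has degree at most `γ` in the subgraph induced by `L_1(u)`, and
(ii) every `w ∈ L_2(u)` has degree at most `γ + 1` in the subgraph induced by `L_1(u) ∪ {w}`. -/
def LocallySparse {V : Type*} (G : SimpleGraph V) (γ : ℕ) : Prop :=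
  ∀ u : V,
    (∀ v ∈ graphSphere G u 1, (G.neighborSet v ∩ graphSphere G u 1).ncard ≤ γ) ∧
    (∀ w ∈ graphSphere G u 2, (G.neighborSet w ∩ graphSphere G u 1).ncard ≤ γ + 1)

/-- An edge `e` (incident to `x`) is *settled* for `x` under the linear order `σ` on the
edge set if at most `deg(x) − ⌊φ·deg(x)/(1+φ)⌋` edges incident to `x` have `σ`-value at
most that of `e`. -/
def Settled {V : Type*} [Fintype V] [DecidableEq V] (G : SimpleGraph V)
    [DecidableRel G.Adj] (φ : ℝ) (σ : G.edgeSet ≃ Fin G.edgeFinset.card)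
    (x : V) (e : G.edgeSet) : Prop :=
  (Finset.univ.filter fun e' : G.edgeSet =>
      x ∈ (e' : Sym2 V) ∧ (σ e' : ℕ) ≤ (σ e : ℕ)).card
    ≤ G.degree x - ⌊φ * (G.degree x : ℝ) / (1 + φ)⌋₊


section Helpers


lemma lemA {α : Type*} [Fintype α] [DecidableEq α] {m : ℕ} (σ : α ≃ Fin m)
    (A : Finset α) {k : ℕ} (hk : k ≤ A.card) :
    k ≤ (A.filter fun a => (A.filter fun b => (σ b : ℕ) ≤ (σ a : ℕ)).card ≤ k).card := by
  set g : α → ℕ := fun a => (A.filter fun b => (σ b : ℕ) ≤ (σ a : ℕ)).card with hg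
  have ginj : ∀ a ∈ A, ∀ b ∈ A, g a = g b → a = b := by
    intro a ha b hb hab
    by_contra hne
    have hσ : (σ a : ℕ) ≠ (σ b : ℕ) := by
      simp only [ne_eq, Fin.val_eq_val, EmbeddingLike.apply_eq_iff_eq]
      exact hne
    wlog h : (σ a : ℕ) < (σ b : ℕ) generalizing a b
    · exact this b hb a ha hab.symm (Ne.symm hne) hσ.symm (by omega)
    have hsub : (A.filter fun c => (σ c : ℕ) ≤ (σ a : ℕ)) ⊆ (A.filter fun c => (σ c : ℕ) ≤ (σ b : ℕ)) :=
      Finset.monotone_filter_right A (fun c _ hc => le_trans hc h.le)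
    have hbmem : b ∈ (A.filter fun c => (σ c : ℕ) ≤ (σ b : ℕ)) := by simp [hb]
    have hbnot : b ∉ (A.filter fun c => (σ c : ℕ) ≤ (σ a : ℕ)) := by
      simp only [Finset.mem_filter, not_and, not_le]
      exact fun _ => h
    have hss : (A.filter fun c => (σ c : ℕ) ≤ (σ a : ℕ)) ⊂ (A.filter fun c => (σ c : ℕ) ≤ (σ b : ℕ)) :=
      Finset.ssubset_iff_of_subset hsub |>.mpr ⟨b, hbmem, hbnot⟩
    have hlt := Finset.card_lt_card hss
    rw [hg] at hab
    simp only at hab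
    omega
  have himsub : A.image g ⊆ Finset.Icc 1 A.card := by
    intro j hj
    simp only [Finset.mem_image] at hj
    obtain ⟨a, ha, rfl⟩ := hj
    refine Finset.mem_Icc.mpr ⟨?_, ?_⟩
    · have hmem : a ∈ A.filter fun b => (σ b : ℕ) ≤ (σ a : ℕ) := by simp [ha]
      have := Finset.card_pos.mpr ⟨a, hmem⟩
      simpa [hg] using this
    · exact Finset.card_le_card (Finset.filter_subset _ _)
  have himcard : (A.image g).card = A.card := Finset.card_image_of_injOn ginj
  have him : A.image g = Finset.Icc 1 A.card := by
    apply Finset.eq_of_subset_of_card_le himsub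
    simp [himcard]
  have hsub : Finset.Icc 1 k ⊆ (A.filter fun a => g a ≤ k).image g := by
    intro j hj
    have hj' : j ∈ Finset.Icc 1 A.card := by
      rw [Finset.mem_Icc] at hj ⊢; omega
    rw [← him, Finset.mem_image] at hj'
    obtain ⟨a, ha, rfl⟩ := hj'
    rw [Finset.mem_image]
    exact ⟨a, Finset.mem_filter.mpr ⟨ha, (Finset.mem_Icc.mp hj).2⟩, rfl⟩
  calc k = (Finset.Icc 1 k).card := by simp
    _ ≤ ((A.filter fun a => g a ≤ k).image g).card := Finset.card_le_card hsub
    _ ≤ (A.filter fun a => g a ≤ k).card := Finset.card_image_le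


lemma swap_mem_iff {α : Type*} [DecidableEq α] {A : Finset α} {e a : α} (he : e ∈ A) (ha : a ∈ A)
    (b : α) : Equiv.swap e a b ∈ A ↔ b ∈ A := by
  rcases eq_or_ne b e with rfl | h1
  · simp [Equiv.swap_apply_left, he, ha]
  rcases eq_or_ne b a with rfl | h2
  · simp [Equiv.swap_apply_right, he, ha]
  · rw [Equiv.swap_apply_of_ne_of_ne h1 h2]

lemma filter_swap_card {α : Type*} [DecidableEq α] {A : Finset α} {e a : α} (he : e ∈ A)
    (ha : a ∈ A) (p : α → Prop) [DecidablePred p] :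
    (A.filter fun b => p (Equiv.swap e a b)).card = (A.filter fun b => p b).card := by
  apply Finset.card_bij' (fun b _ => Equiv.swap e a b) (fun b _ => Equiv.swap e a b)
  · intro b hb
    simp only [Finset.mem_filter] at hb ⊢
    exact ⟨(swap_mem_iff he ha b).mpr hb.1, hb.2⟩
  · intro b hb
    simp only [Finset.mem_filter] at hb ⊢
    refine ⟨(swap_mem_iff he ha b).mpr hb.1, ?_⟩
    rw [Equiv.swap_apply_self]
    exact hb.2
  · intro b _; exact Equiv.swap_apply_self _ _ _
  · intro b _; exact Equiv.swap_apply_self _ _ _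

lemma lemB {α : Type*} [Fintype α] [DecidableEq α] {m : ℕ}
    (A : Finset α) {e a : α} (he : e ∈ A) (ha : a ∈ A) (k : ℕ) :
    (Finset.univ.filter fun σ : α ≃ Fin m =>
        (A.filter fun b => (σ b : ℕ) ≤ (σ a : ℕ)).card ≤ k).card
      = (Finset.univ.filter fun σ : α ≃ Fin m =>
        (A.filter fun b => (σ b : ℕ) ≤ (σ e : ℕ)).card ≤ k).card := by
  have hinv : ∀ σ : α ≃ Fin m, (Equiv.swap e a).trans ((Equiv.swap e a).trans σ) = σ := by
    intro σ; ext x; simp [Equiv.trans_apply, Equiv.swap_apply_self]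
  apply Finset.card_bij' (fun σ _ => (Equiv.swap e a).trans σ)
    (fun σ _ => (Equiv.swap e a).trans σ)
  · intro σ hσ
    simp only [Finset.mem_filter, Finset.mem_univ, true_and] at hσ ⊢
    have h1 : (A.filter fun b => ((((Equiv.swap e a).trans σ) b : ℕ)) ≤ (((Equiv.swap e a).trans σ) e : ℕ)).card
        = (A.filter fun b => (σ b : ℕ) ≤ (σ a : ℕ)).card := by
      simp only [Equiv.trans_apply, Equiv.swap_apply_left]
      exact filter_swap_card he ha (fun c => (σ c : ℕ) ≤ (σ a : ℕ))
    rw [h1]; exact hσ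
  · intro σ hσ
    simp only [Finset.mem_filter, Finset.mem_univ, true_and] at hσ ⊢
    have h1 : (A.filter fun b => ((((Equiv.swap e a).trans σ) b : ℕ)) ≤ (((Equiv.swap e a).trans σ) a : ℕ)).card
        = (A.filter fun b => (σ b : ℕ) ≤ (σ e : ℕ)).card := by
      simp only [Equiv.trans_apply, Equiv.swap_apply_right]
      exact filter_swap_card he ha (fun c => (σ c : ℕ) ≤ (σ e : ℕ))
    rw [h1]; exact hσ
  · intro σ _; exact hinv σ
  · intro σ _; exact hinv σ

lemma lemC {α : Type*} [Fintype α] [DecidableEq α] {m : ℕ}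
    (A : Finset α) {e : α} (he : e ∈ A) {k : ℕ} (hk : k ≤ A.card) :
    k * Fintype.card (α ≃ Fin m)
      ≤ A.card * (Finset.univ.filter fun σ : α ≃ Fin m =>
          (A.filter fun b => (σ b : ℕ) ≤ (σ e : ℕ)).card ≤ k).card := by
  calc k * Fintype.card (α ≃ Fin m)
      = ∑ _σ : α ≃ Fin m, k := by
        rw [Finset.sum_const, Finset.card_univ, smul_eq_mul, mul_comm]
    _ ≤ ∑ σ : α ≃ Fin m,
          (A.filter fun a => (A.filter fun b => (σ b : ℕ) ≤ (σ a : ℕ)).card ≤ k).card :=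
      Finset.sum_le_sum fun σ _ => lemA σ A hk
    _ = ∑ σ : α ≃ Fin m, ∑ a ∈ A,
          if (A.filter fun b => (σ b : ℕ) ≤ (σ a : ℕ)).card ≤ k then 1 else 0 :=
      Finset.sum_congr rfl fun σ _ => Finset.card_filter _ _
    _ = ∑ a ∈ A, ∑ σ : α ≃ Fin m,
          if (A.filter fun b => (σ b : ℕ) ≤ (σ a : ℕ)).card ≤ k then 1 else 0 :=
      Finset.sum_comm
    _ = ∑ a ∈ A, (Finset.univ.filter fun σ : α ≃ Fin m =>
          (A.filter fun b => (σ b : ℕ) ≤ (σ a : ℕ)).card ≤ k).card :=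
      Finset.sum_congr rfl fun a _ => (Finset.card_filter _ _).symm
    _ = ∑ _a ∈ A, (Finset.univ.filter fun σ : α ≃ Fin m =>
          (A.filter fun b => (σ b : ℕ) ≤ (σ e : ℕ)).card ≤ k).card :=
      Finset.sum_congr rfl fun a ha => lemB A he ha k
    _ = _ := by rw [Finset.sum_const, smul_eq_mul]


open scoped Classical in
lemma per_edge {V : Type*} [Fintype V] [DecidableEq V] (G : SimpleGraph V)
    [DecidableRel G.Adj] (φ : ℝ) (hφ : 0 ≤ φ) (x : V) (e : G.edgeSet)
    (hx : x ∈ (e : Sym2 V)) :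
    (Fintype.card (G.edgeSet ≃ Fin G.edgeFinset.card) : ℝ) / (1 + φ)
      ≤ ((Finset.univ.filter fun σ : G.edgeSet ≃ Fin G.edgeFinset.card =>
          Settled G φ σ x e).card : ℝ) := by
  set d := G.degree x with hd
  set A : Finset G.edgeSet := Finset.univ.filter (fun e' : G.edgeSet => x ∈ (e' : Sym2 V)) with hA
  have heA : e ∈ A := Finset.mem_filter.mpr ⟨Finset.mem_univ e, hx⟩
  have hAcard : A.card = d := by
    rw [hA, ← Fintype.card_subtype, hd, ← SimpleGraph.card_incidenceSet_eq_degree G x]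
    apply Fintype.card_congr
    exact {
      toFun := fun p => ⟨(p.1 : Sym2 V), p.1.2, p.2⟩
      invFun := fun p => ⟨⟨(p : Sym2 V), p.2.1⟩, p.2.2⟩
      left_inv := fun p => rfl
      right_inv := fun p => rfl }
  set k : ℕ := d - ⌊φ * (d : ℝ) / (1 + φ)⌋₊ with hkdef
  have hk : k ≤ A.card := by omega
  have hSet : ∀ σ : G.edgeSet ≃ Fin G.edgeFinset.card,
      Settled G φ σ x e ↔ (A.filter fun b => (σ b : ℕ) ≤ (σ e : ℕ)).card ≤ k := by
    intro σ
    unfold Settled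
    rw [hA, Finset.filter_filter]
  have hfilteq : (Finset.univ.filter fun σ : G.edgeSet ≃ Fin G.edgeFinset.card =>
          Settled G φ σ x e).card
      = (Finset.univ.filter fun σ : G.edgeSet ≃ Fin G.edgeFinset.card =>
          (A.filter fun b => (σ b : ℕ) ≤ (σ e : ℕ)).card ≤ k).card := by
    congr 1
    apply Finset.filter_congr
    intro σ _
    simp only [hSet σ]
  have hnat := lemC (m := G.edgeFinset.card) A heA hk
  rw [hAcard] at hnat
  set N := Fintype.card (G.edgeSet ≃ Fin G.edgeFinset.card) with hN
  set S := (Finset.univ.filter fun σ : G.edgeSet ≃ Fin G.edgeFinset.card =>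
          (A.filter fun b => (σ b : ℕ) ≤ (σ e : ℕ)).card ≤ k).card with hS
  rw [hfilteq]
  have hd1 : 1 ≤ d := by
    have : 0 < A.card := Finset.card_pos.mpr ⟨e, heA⟩
    omega
  have h1φ : (0:ℝ) < 1 + φ := by linarith
  have hfl : (⌊φ * (d : ℝ) / (1 + φ)⌋₊ : ℝ) ≤ φ * (d : ℝ) / (1 + φ) :=
    Nat.floor_le (by positivity)
  have hfld : ⌊φ * (d : ℝ) / (1 + φ)⌋₊ ≤ d := by
    have h2 : φ * (d : ℝ) / (1 + φ) ≤ (d : ℝ) := by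
      rw [div_le_iff₀ h1φ]
      nlinarith [Nat.cast_nonneg (α := ℝ) d]
    calc ⌊φ * (d : ℝ) / (1 + φ)⌋₊ ≤ ⌊(d:ℝ)⌋₊ := Nat.floor_le_floor h2
      _ = d := Nat.floor_natCast d
  have hkcast : (k : ℝ) = (d : ℝ) - (⌊φ * (d : ℝ) / (1 + φ)⌋₊ : ℝ) := by
    rw [hkdef]
    push_cast [hfld]
    ring
  have hkreal : (d : ℝ) ≤ (k : ℝ) * (1 + φ) := by
    have hc : (φ * (d : ℝ) / (1 + φ)) * (1 + φ) = φ * d := div_mul_cancel₀ _ (ne_of_gt h1φ)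
    nlinarith [hfl]
  -- from hnat : k * N ≤ d * S
  have hnatR : (k : ℝ) * (N : ℝ) ≤ (d : ℝ) * (S : ℝ) := by exact_mod_cast hnat
  rw [div_le_iff₀ h1φ]
  have hdpos : (0:ℝ) < d := by exact_mod_cast hd1
  have key : (d:ℝ) * (N:ℝ) ≤ (d:ℝ) * ((S:ℝ) * (1 + φ)) := by
    calc (d:ℝ) * (N:ℝ) ≤ ((k:ℝ) * (1 + φ)) * (N:ℝ) :=
          mul_le_mul_of_nonneg_right hkreal (Nat.cast_nonneg N)
      _ = ((k:ℝ) * (N:ℝ)) * (1 + φ) := by ring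
      _ ≤ ((d:ℝ) * (S:ℝ)) * (1 + φ) := mul_le_mul_of_nonneg_right hnatR h1φ.le
      _ = (d:ℝ) * ((S:ℝ) * (1 + φ)) := by ring
  exact le_of_mul_le_mul_left key hdpos

end Helpers

/-- For a uniformly random linear order `σ` on the edges of `G`, a vertex
`v` and a map `f : L_2(v) → L_1(v)` with `f w` adjacent to `w`, the expected number of
`w ∈ L_2(v)` whose edge `{f w, w}` is settled for `f w` is at least `|L_2(v)|/(1+φ)`;
in particular `E[1 + |L_1(v)| + #settled] ≥ |B_2(v)|/(1+φ)`. -/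
theorem stmt_9 {V : Type*} [Fintype V] [DecidableEq V] (G : SimpleGraph V)
    [DecidableRel G.Adj] (φ : ℝ) (hφ : 0 ≤ φ) (v : V) (f : V → V)
    (hf1 : ∀ w ∈ graphSphere G v 2, f w ∈ graphSphere G v 1)
    (hf2 : ∀ w ∈ graphSphere G v 2, G.Adj (f w) w) :
    (((graphSphere G v 2).ncard : ℝ) / (1 + φ)
      ≤ (∑ σ : G.edgeSet ≃ Fin G.edgeFinset.card,
          (({w ∈ graphSphere G v 2 |
              ∃ e : G.edgeSet, (e : Sym2 V) = s(f w, w) ∧ Settled G φ σ (f w) e}).ncard : ℝ))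
        / (Fintype.card (G.edgeSet ≃ Fin G.edgeFinset.card) : ℝ)) ∧
    (((graphBall G v 2).ncard : ℝ) / (1 + φ)
      ≤ (∑ σ : G.edgeSet ≃ Fin G.edgeFinset.card,
          ((1 : ℝ) + ((graphSphere G v 1).ncard : ℝ) +
            (({w ∈ graphSphere G v 2 |
              ∃ e : G.edgeSet, (e : Sym2 V) = s(f w, w) ∧ Settled G φ σ (f w) e}).ncard : ℝ)))
        / (Fintype.card (G.edgeSet ≃ Fin G.edgeFinset.card) : ℝ)) := by
  classical
  have h1φ : (0:ℝ) < 1 + φ := by linarith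
  set N := Fintype.card (G.edgeSet ≃ Fin G.edgeFinset.card) with hN
  have hNpos : 0 < N :=
    Fintype.card_pos_iff.mpr ⟨Fintype.equivFinOfCardEq SimpleGraph.edgeFinset_card.symm⟩
  have hNR : (0:ℝ) < (N:ℝ) := by exact_mod_cast hNpos
  set S2 : Set V := graphSphere G v 2 with hS2
  set P : V → (G.edgeSet ≃ Fin G.edgeFinset.card) → Prop :=
    fun w σ => ∃ e : G.edgeSet, (e : Sym2 V) = s(f w, w) ∧ Settled G φ σ (f w) e with hP
  set F : Finset V := (Set.toFinite S2).toFinset with hF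
  have hkey : ∀ σ : G.edgeSet ≃ Fin G.edgeFinset.card,
      ({w ∈ S2 | P w σ}).ncard = (F.filter fun w => P w σ).card := by
    intro σ
    rw [Set.ncard_eq_toFinset_card _ (Set.toFinite _)]
    congr 1
    ext w
    simp only [Set.Finite.mem_toFinset, Set.mem_setOf_eq, Finset.mem_filter, hF, hS2,
      graphSphere]
  -- the main expectation sum
  set T : ℝ := ∑ σ : G.edgeSet ≃ Fin G.edgeFinset.card, (({w ∈ S2 | P w σ}).ncard : ℝ) with hT
  have hTbound : (F.card : ℝ) * ((N:ℝ)/(1+φ)) ≤ T := by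
    have h1 : T = ∑ σ : G.edgeSet ≃ Fin G.edgeFinset.card,
        ∑ w ∈ F, (if P w σ then (1:ℝ) else 0) := by
      rw [hT]
      refine Finset.sum_congr rfl fun σ _ => ?_
      rw [hkey σ, Finset.sum_boole]
    rw [h1, Finset.sum_comm]
    have h2 : ∀ w ∈ F, (N:ℝ)/(1+φ)
        ≤ ∑ σ : G.edgeSet ≃ Fin G.edgeFinset.card, (if P w σ then (1:ℝ) else 0) := by
      intro w hw
      have hwS2 : w ∈ S2 := by
        rw [hF, Set.Finite.mem_toFinset] at hw; exact hw
      have hadj : G.Adj (f w) w := hf2 w hwS2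
      set ew : G.edgeSet := ⟨s(f w, w), (SimpleGraph.mem_edgeSet G).mpr hadj⟩ with hew
      have hmx : f w ∈ (ew : Sym2 V) := Sym2.mem_mk_left _ _
      have hpe := per_edge G φ hφ (f w) ew hmx
      calc (N:ℝ)/(1+φ)
          ≤ ((Finset.univ.filter fun σ : G.edgeSet ≃ Fin G.edgeFinset.card =>
              Settled G φ σ (f w) ew).card : ℝ) := hpe
        _ = ∑ σ : G.edgeSet ≃ Fin G.edgeFinset.card,
              (if Settled G φ σ (f w) ew then (1:ℝ) else 0) := (Finset.sum_boole _ _).symm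
        _ ≤ ∑ σ : G.edgeSet ≃ Fin G.edgeFinset.card, (if P w σ then (1:ℝ) else 0) := by
            refine Finset.sum_le_sum fun σ _ => ?_
            by_cases hs : Settled G φ σ (f w) ew
            · have hp : P w σ := ⟨ew, rfl, hs⟩
              simp [hs, hp]
            · simp only [hs, if_false]
              split_ifs <;> norm_num
    calc (F.card : ℝ) * ((N:ℝ)/(1+φ)) = ∑ _w ∈ F, (N:ℝ)/(1+φ) := by
          rw [Finset.sum_const, nsmul_eq_mul]
      _ ≤ _ := Finset.sum_le_sum h2
  have hS2card : ((graphSphere G v 2).ncard : ℝ) = (F.card : ℝ) := by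
    rw [← hS2, Set.ncard_eq_toFinset_card _ (Set.toFinite S2), hF]
  -- part 1
  have part1 : ((graphSphere G v 2).ncard : ℝ) / (1 + φ) ≤ T / (N:ℝ) := by
    rw [hS2card, div_le_div_iff₀ h1φ hNR]
    calc (F.card : ℝ) * N = ((F.card : ℝ) * ((N:ℝ)/(1+φ))) * (1+φ) := by
          field_simp
      _ ≤ T * (1+φ) := mul_le_mul_of_nonneg_right hTbound h1φ.le
  refine ⟨part1, ?_⟩
  -- part 2
  set L1 : ℝ := ((graphSphere G v 1).ncard : ℝ) with hL1
  have hL1nn : 0 ≤ L1 := by rw [hL1]; positivity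
  have hsum2 : ∑ σ : G.edgeSet ≃ Fin G.edgeFinset.card,
      ((1 : ℝ) + L1 + (({w ∈ S2 | P w σ}).ncard : ℝ)) = (N:ℝ) * (1 + L1) + T := by
    rw [Finset.sum_add_distrib, Finset.sum_const, Finset.card_univ, ← hN, nsmul_eq_mul, hT]
  have hBsub : graphBall G v 2 ⊆ {v} ∪ (graphSphere G v 1 ∪ graphSphere G v 2) := by
    intro w hw
    obtain ⟨hr, hle⟩ := hw
    have h012 : G.dist v w = 0 ∨ G.dist v w = 1 ∨ G.dist v w = 2 := by omega
    rcases h012 with h0 | h1 | h2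
    · left
      have := SimpleGraph.dist_eq_zero_iff_eq_or_not_reachable.mp h0
      rcases this with rfl | hnr
      · exact Set.mem_singleton _
      · exact absurd hr hnr
    · right; left; exact ⟨hr, h1⟩
    · right; right; exact ⟨hr, h2⟩
  have hBle : ((graphBall G v 2).ncard : ℝ)
      ≤ 1 + L1 + ((graphSphere G v 2).ncard : ℝ) := by
    have hn1 : (graphBall G v 2).ncard
        ≤ ({v} ∪ (graphSphere G v 1 ∪ graphSphere G v 2) : Set V).ncard :=
      Set.ncard_le_ncard hBsub (Set.toFinite _)
    have hn2 : ({v} ∪ (graphSphere G v 1 ∪ graphSphere G v 2) : Set V).ncard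
        ≤ 1 + ((graphSphere G v 1).ncard + (graphSphere G v 2).ncard) := by
      calc ({v} ∪ (graphSphere G v 1 ∪ graphSphere G v 2) : Set V).ncard
          ≤ ({v} : Set V).ncard + (graphSphere G v 1 ∪ graphSphere G v 2).ncard :=
            Set.ncard_union_le _ _
        _ ≤ 1 + ((graphSphere G v 1).ncard + (graphSphere G v 2).ncard) := by
            have := Set.ncard_union_le (graphSphere G v 1) (graphSphere G v 2)
            simp only [Set.ncard_singleton]
            omega
    have := hn1.trans hn2
    rw [hL1]
    have h' : (graphBall G v 2).ncard
        ≤ 1 + (graphSphere G v 1).ncard + (graphSphere G v 2).ncard := by omega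
    exact_mod_cast h'
  rw [hsum2]
  have hre : ((N:ℝ) * (1 + L1) + T) / (N:ℝ) = (1 + L1) + T / (N:ℝ) := by
    field_simp
  rw [hre]
  have h2' : ((1:ℝ) + L1) / (1 + φ) ≤ 1 + L1 :=
    div_le_self (by linarith) (by linarith)
  calc ((graphBall G v 2).ncard : ℝ) / (1 + φ)
      ≤ (1 + L1 + ((graphSphere G v 2).ncard : ℝ)) / (1 + φ) := by
        gcongr
    _ = (1 + L1) / (1 + φ) + ((graphSphere G v 2).ncard : ℝ) / (1 + φ) := by ring
    _ ≤ (1 + L1) + T / (N:ℝ) := add_le_add h2' part1
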